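/- arXiv:2111.05975 — 8 statements merged into one kernel-verified Lean document; each statement's English description precedes it below -/
import Mathlib

section
/- A subset B of a metric space (X,d) is Bourbaki-bounded in X if and only if every sequence in B has a Bourbaki-Cauchy subsequence in X. -/
open Metric Filter Set

/-- Iterated chain-ball: `chainBall x eps m` is the set of points joinable to `x`
by a chain of `m + 1` steps each of length `< eps`; `chainBall x eps 0` is the open
ball (corresponding to `B^1`), and `chainBall x eps m` corresponds to `B^(m+1)`. -/
def chainBall {X : Type*} [PseudoMetricSpace X] (x : X) (eps : Real) : Nat -> Set X
  | 0 => Metric.ball x eps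
  | m + 1 => Set.iUnion fun y : X => Set.iUnion fun _ : y ∈ chainBall x eps m => Metric.ball y eps

/-- `B` is Bourbaki-bounded in `X`. -/
def IsBourbakiBounded {X : Type*} [PseudoMetricSpace X] (B : Set X) : Prop :=
  ∀ ε > (0 : ℝ), ∃ m : ℕ, ∃ s : Finset X, B ⊆ ⋃ x ∈ s, chainBall x ε m

/-- A sequence is Bourbaki-Cauchy in `X`. -/
def BourbakiCauchySeq {X : Type*} [PseudoMetricSpace X] (u : ℕ → X) : Prop :=
  ∀ ε > (0 : ℝ), ∃ m n₀ : ℕ, ∃ p : X, ∀ n ≥ n₀, u n ∈ chainBall p ε m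

section Aux
variable {X : Type*} [PseudoMetricSpace X]

lemma mem_chainBall_succ {x : X} {ε : ℝ} {m : ℕ} {z : X} :
    z ∈ chainBall x ε (m+1) ↔ ∃ y, y ∈ chainBall x ε m ∧ z ∈ Metric.ball y ε := by
  simp [chainBall]

lemma chainBall_mono_eps {x : X} {ε ε' : ℝ} (h : ε ≤ ε') (m : ℕ) :
    chainBall x ε m ⊆ chainBall x ε' m := by
  induction m with
  | zero => exact Metric.ball_subset_ball h
  | succ m ih =>
    intro z hz
    rw [mem_chainBall_succ] at hz ⊢
    obtain ⟨y, hy, hz⟩ := hz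
    exact ⟨y, ih hy, Metric.ball_subset_ball h hz⟩

lemma chainBall_mono_m {x : X} {ε : ℝ} (hε : 0 < ε) {m n : ℕ} (h : m ≤ n) :
    chainBall x ε m ⊆ chainBall x ε n := by
  induction n with
  | zero => rw [Nat.le_zero.mp h]
  | succ n ih =>
    rcases Nat.lt_or_ge m (n+1) with h' | h'
    · intro z hz
      exact mem_chainBall_succ.2 ⟨z, ih (Nat.lt_succ_iff.mp h') hz, Metric.mem_ball_self hε⟩
    · rw [le_antisymm h h']

lemma chainBall_trans {x y : X} {ε : ℝ} {m n : ℕ} {z : X}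
    (hy : y ∈ chainBall x ε m) (hz : z ∈ chainBall y ε n) :
    z ∈ chainBall x ε (m + n + 1) := by
  induction n generalizing z with
  | zero => exact mem_chainBall_succ.2 ⟨y, hy, hz⟩
  | succ n ih =>
    obtain ⟨w, hw, hz⟩ := mem_chainBall_succ.1 hz
    exact mem_chainBall_succ.2 ⟨w, ih hw, hz⟩

lemma chainBall_cons {x y : X} {ε : ℝ} {m : ℕ} {z : X}
    (hy : y ∈ Metric.ball x ε) (hz : z ∈ chainBall y ε m) :
    z ∈ chainBall x ε (m + 1) := by
  induction m generalizing z with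
  | zero => exact mem_chainBall_succ.2 ⟨y, hy, hz⟩
  | succ m ih =>
    obtain ⟨w, hw, hz⟩ := mem_chainBall_succ.1 hz
    exact mem_chainBall_succ.2 ⟨w, ih hw, hz⟩

lemma chainBall_symm {x y : X} {ε : ℝ} {m : ℕ} (h : y ∈ chainBall x ε m) :
    x ∈ chainBall y ε m := by
  induction m generalizing y with
  | zero => exact Metric.mem_ball_comm.mp h
  | succ m ih =>
    obtain ⟨w, hw, hy⟩ := mem_chainBall_succ.1 h
    exact chainBall_cons (Metric.mem_ball_comm.mp hy) (ih hw)

end Aux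

/-- A subset of a metric space is Bourbaki-bounded iff every sequence in it has a
Bourbaki-Cauchy subsequence. -/
theorem isBourbakiBounded_iff_subseq (X : Type*) [MetricSpace X] (B : Set X) :
    IsBourbakiBounded B ↔
      ∀ u : ℕ → X, (∀ n, u n ∈ B) →
        ∃ φ : ℕ → ℕ, StrictMono φ ∧ BourbakiCauchySeq (u ∘ φ) := by
  constructor
  · -- forward
    intro hB u hu
    have key : ∀ k : ℕ, ∀ S : Set ℕ, S.Infinite →
        ∃ p : X, ∃ m : ℕ, {n ∈ S | u n ∈ chainBall p (1/(k+1)) m}.Infinite := by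
      intro k S hS
      have hε : (0:ℝ) < 1/(k+1) := by positivity
      obtain ⟨m, s, hcov⟩ := hB (1/(k+1)) hε
      by_contra hcon
      push_neg at hcon
      refine hS ?_
      have hsub : S ⊆ ⋃ x ∈ s, {n ∈ S | u n ∈ chainBall x (1/(k+1)) m} := by
        intro n hn
        have := hcov (hu n)
        simp only [Set.mem_iUnion] at this ⊢
        obtain ⟨x, hx, h⟩ := this
        exact ⟨x, hx, hn, h⟩
      exact (Set.Finite.biUnion s.finite_toSet
        (fun x _ => hcon x m)).subset hsub
    choose P M hPM using key
    -- nested infinite sets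
    let Srec : ℕ → {S : Set ℕ // S.Infinite} := fun k => Nat.rec
      ⟨Set.univ, Set.infinite_univ⟩
      (fun k S => ⟨{n ∈ S.1 | u n ∈ chainBall (P k S.1 S.2) (1/(k+1)) (M k S.1 S.2)},
                   hPM k S.1 S.2⟩) k
    have hstep : ∀ k, (Srec (k+1)).1 =
        {n ∈ (Srec k).1 | u n ∈ chainBall (P k (Srec k).1 (Srec k).2) (1/(k+1))
          (M k (Srec k).1 (Srec k).2)} := fun k => rfl
    have hanti : Antitone fun k => (Srec k).1 := by
      apply antitone_nat_of_succ_le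
      intro k
      rw [hstep k]
      exact Set.sep_subset _ _
    -- extract strictly increasing indices
    have hg : ∀ k b : ℕ, ∃ n, n ∈ (Srec k).1 ∧ b < n := by
      intro k b
      obtain ⟨n, hn, hbn⟩ := (Srec k).2.exists_gt b
      exact ⟨n, hn, hbn⟩
    choose g hg1 hg2 using hg
    let φ : ℕ → ℕ := fun k => Nat.rec (g 0 0) (fun k prev => g (k+1) prev) k
    have hφmem : ∀ k, φ k ∈ (Srec k).1 := by
      intro k
      cases k with
      | zero => exact hg1 0 0
      | succ k => exact hg1 (k+1) (φ k)
    have hφmono : StrictMono φ := by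
      apply strictMono_nat_of_lt_succ
      intro k
      exact hg2 (k+1) (φ k)
    refine ⟨φ, hφmono, ?_⟩
    intro ε hε
    obtain ⟨k, hk⟩ := exists_nat_one_div_lt hε
    refine ⟨M k (Srec k).1 (Srec k).2, k + 1, P k (Srec k).1 (Srec k).2, ?_⟩
    intro n hn
    have h1 : φ n ∈ (Srec (k+1)).1 := hanti hn (hφmem n)
    rw [hstep k] at h1
    exact chainBall_mono_eps (le_of_lt hk) _ h1.2
  · -- backward
    intro h
    by_contra hB
    rw [IsBourbakiBounded] at hB
    push_neg at hB
    obtain ⟨ε, hε, hcov⟩ := hB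
    haveI := Classical.decEq X
    have pick : ∀ (m : ℕ) (s : Finset X), ∃ b, b ∈ B ∧ b ∉ ⋃ x ∈ s, chainBall x ε m := by
      intro m s
      have := hcov m s
      rw [Set.not_subset] at this
      exact this
    choose f hfB hf using pick
    -- state: (current value, finset of all values so far)
    let st : ℕ → X × Finset X := fun n => Nat.rec
      (f 0 ∅, {f 0 ∅})
      (fun n p => (f n p.2, insert (f n p.2) p.2)) n
    let v : ℕ → X := fun n => (st n).1
    have hvB : ∀ n, v n ∈ B := by
      intro n
      cases n with
      | zero => exact hfB 0 ∅
      | succ n => exact hfB n (st n).2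
    have hmem2 : ∀ n, v n ∈ (st n).2 := by
      intro n
      cases n with
      | zero => exact Finset.mem_singleton_self _
      | succ n => exact Finset.mem_insert_self _ _
    have hmono2 : ∀ i n, i ≤ n → v i ∈ (st n).2 := by
      intro i n hin
      induction n with
      | zero => rw [Nat.le_zero.mp hin]; exact hmem2 0
      | succ n ih =>
        rcases Nat.lt_or_ge i (n+1) with h' | h'
        · exact Finset.mem_insert_of_mem (ih (Nat.lt_succ_iff.mp h'))
        · rw [le_antisymm hin h']; exact hmem2 (n+1)
    have hnot : ∀ i n, i ≤ n → v (n+1) ∉ chainBall (v i) ε n := by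
      intro i n hin hmem
      refine hf n (st n).2 ?_
      simp only [Set.mem_iUnion]
      exact ⟨v i, hmono2 i n hin, hmem⟩
    obtain ⟨φ, hφ, hBC⟩ := h v hvB
    obtain ⟨m, n₀, p, hp⟩ := hBC ε hε
    set n₁ := n₀ + 2*m + 2 with hn₁
    have h0 : v (φ n₀) ∈ chainBall p ε m := hp n₀ le_rfl
    have h1 : v (φ n₁) ∈ chainBall p ε m := hp n₁ (by omega)
    have hchain : v (φ n₁) ∈ chainBall (v (φ n₀)) ε (m + m + 1) :=
      chainBall_trans (chainBall_symm h0) h1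
    have hab : φ n₀ < φ n₁ := hφ (by omega)
    have hb : m + m + 2 ≤ φ n₁ := le_trans (by omega) (hφ.le_apply)
    obtain ⟨c, hc⟩ : ∃ c, φ n₁ = c + 1 := ⟨φ n₁ - 1, by omega⟩
    refine hnot (φ n₀) c (by omega) ?_
    rw [← hc]
    exact chainBall_mono_m hε (by omega) hchain
end

section
/- A metric space (X,d) is Bourbaki-complete if and only if it is complete and every Bourbaki-bounded subset of X is totally bounded. -/
open Metric Filter Set

/-- A metric space is (sequentially) Bourbaki-complete if every Bourbaki-Cauchy
sequence has a cluster point. -/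
def IsBourbakiComplete (X : Type*) [PseudoMetricSpace X] : Prop :=
  ∀ u : ℕ → X, BourbakiCauchySeq u → ∃ x : X, MapClusterPt x atTop u

section Aux

variable {X : Type*} [PseudoMetricSpace X]

lemma chainBall_mono_radius {x : X} {δ ε : ℝ} (h : δ ≤ ε) :
    ∀ m, chainBall x δ m ⊆ chainBall x ε m
  | 0 => ball_subset_ball h
  | m + 1 => by
    intro z hz
    simp only [chainBall, Set.mem_iUnion] at hz ⊢
    obtain ⟨y, hy, hz⟩ := hz
    exact ⟨y, chainBall_mono_radius h m hy, ball_subset_ball h hz⟩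

lemma self_mem_chainBall {x : X} {ε : ℝ} (hε : 0 < ε) : ∀ m, x ∈ chainBall x ε m
  | 0 => mem_ball_self hε
  | m + 1 => by
    simp only [chainBall, Set.mem_iUnion]
    exact ⟨x, self_mem_chainBall hε m, mem_ball_self hε⟩

lemma exists_subseq_chainBall {B : Set X} (hB : IsBourbakiBounded B) (w : ℕ → X)
    (hw : ∀ n, w n ∈ B) {δ : ℝ} (hδ : 0 < δ) :
    ∃ φ : ℕ → ℕ, StrictMono φ ∧ ∃ m p, ∀ n, w (φ n) ∈ chainBall p δ m := by
  obtain ⟨m, s, hs⟩ := hB δ hδ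
  have hinf : ∃ p ∈ s, {n | w n ∈ chainBall p δ m}.Infinite := by
    by_contra h
    push_neg at h
    have hsub : (Set.univ : Set ℕ) ⊆ ⋃ p ∈ s, {n | w n ∈ chainBall p δ m} := by
      intro n _
      have := hs (hw n)
      simpa using this
    exact Set.infinite_univ ((Set.Finite.biUnion s.finite_toSet h).subset hsub)
  obtain ⟨p, _, hp⟩ := hinf
  obtain ⟨φ, hφ, hφ2⟩ :=
    Filter.extraction_of_frequently_atTop (Nat.frequently_atTop_iff_infinite.mpr hp)
  exact ⟨φ, hφ, m, p, hφ2⟩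

/-- Key step: given a sequence in a Bourbaki-bounded set and a precision `1/(k+1)`,
extract a subsequence contained in a single chain-ball. -/
lemma chainExtract_key {B : Set X} (hB : IsBourbakiBounded B) (u : ℕ → X)
    (hu : ∀ n, u n ∈ B) (k : ℕ) (Φ : ℕ → ℕ) :
    ∃ φ : ℕ → ℕ, StrictMono φ ∧
      ∃ m p, ∀ n, u (Φ (φ n)) ∈ chainBall p (1 / (k + 1)) m := by
  have : (0 : ℝ) < 1 / (k + 1) := by positivity
  exact exists_subseq_chainBall hB (fun n => u (Φ n)) (fun n => hu _) this

/-- Iterated extraction of nested subsequences at precisions `1/(k+1)`. -/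
noncomputable def chainExtract {B : Set X} (hB : IsBourbakiBounded B) (u : ℕ → X)
    (hu : ∀ n, u n ∈ B) : ℕ → {f : ℕ → ℕ // StrictMono f}
  | 0 => ⟨(chainExtract_key hB u hu 0 id).choose,
      (chainExtract_key hB u hu 0 id).choose_spec.1⟩
  | k + 1 =>
    ⟨(chainExtract hB u hu k).1 ∘
        (chainExtract_key hB u hu (k + 1) (chainExtract hB u hu k).1).choose,
      (chainExtract hB u hu k).2.comp
        (chainExtract_key hB u hu (k + 1) (chainExtract hB u hu k).1).choose_spec.1⟩

lemma chainExtract_chain {B : Set X} (hB : IsBourbakiBounded B) (u : ℕ → X)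
    (hu : ∀ n, u n ∈ B) (k : ℕ) :
    ∃ m p, ∀ n, u ((chainExtract hB u hu k).1 n) ∈ chainBall p (1 / (k + 1)) m := by
  cases k with
  | zero => exact (chainExtract_key hB u hu 0 id).choose_spec.2
  | succ k => exact (chainExtract_key hB u hu (k + 1) (chainExtract hB u hu k).1).choose_spec.2

lemma chainExtract_factor {B : Set X} (hB : IsBourbakiBounded B) (u : ℕ → X)
    (hu : ∀ n, u n ∈ B) (k : ℕ) :
    ∀ n, k ≤ n → ∀ i, ∃ j, (chainExtract hB u hu n).1 i = (chainExtract hB u hu k).1 j := by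
  intro n hn
  induction n, hn using Nat.le_induction with
  | base => exact fun i => ⟨i, rfl⟩
  | succ n hn ih =>
    intro i
    obtain ⟨j, hj⟩ := ih
      ((chainExtract_key hB u hu (n + 1) (chainExtract hB u hu n).1).choose i)
    exact ⟨j, by rw [chainExtract]; exact hj⟩

lemma chainExtract_diag_strictMono {B : Set X} (hB : IsBourbakiBounded B) (u : ℕ → X)
    (hu : ∀ n, u n ∈ B) :
    StrictMono (fun n => (chainExtract hB u hu n).1 n) := by
  apply strictMono_nat_of_lt_succ
  intro n
  show (chainExtract hB u hu n).1 n < (chainExtract hB u hu (n + 1)).1 (n + 1)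
  rw [chainExtract]
  calc (chainExtract hB u hu n).1 n
      < (chainExtract hB u hu n).1 (n + 1) := (chainExtract hB u hu n).2 (Nat.lt_succ_self n)
    _ ≤ (chainExtract hB u hu n).1
        ((chainExtract_key hB u hu (n + 1) (chainExtract hB u hu n).1).choose (n + 1)) :=
        (chainExtract hB u hu n).2.monotone
          ((chainExtract_key hB u hu (n + 1) (chainExtract hB u hu n).1).choose_spec.1.le_apply)

end Aux

/-- A metric space is Bourbaki-complete iff it is complete and every Bourbaki-bounded
subset is totally bounded. -/
theorem isBourbakiComplete_iff_complete_and_tb (X : Type*) [MetricSpace X] :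
    IsBourbakiComplete X ↔
      CompleteSpace X ∧ ∀ B : Set X, IsBourbakiBounded B → TotallyBounded B := by
  constructor
  · intro H
    constructor
    · -- completeness
      apply Metric.complete_of_cauchySeq_tendsto
      intro u hu
      have bc : BourbakiCauchySeq u := by
        intro ε hε
        obtain ⟨N, hN⟩ := Metric.cauchySeq_iff'.mp hu ε hε
        exact ⟨0, N, u N, fun n hn => by simpa [chainBall, mem_ball] using hN n hn⟩
      obtain ⟨x, hx⟩ := H u bc
      exact ⟨x, le_nhds_of_cauchy_adhp hu hx⟩
    · -- Bourbaki-bounded → totally bounded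
      intro B hB
      classical
      rw [Metric.totallyBounded_iff]
      by_contra hcon
      push_neg at hcon
      obtain ⟨ε, hε, hcov⟩ := hcon
      -- construct an ε-separated sequence in B
      have sep : ∀ t : Finset X, ∃ z ∈ B, ∀ y ∈ t, ε ≤ dist z y := by
        intro t
        have := hcov (↑t : Set X) t.finite_toSet
        rw [Set.not_subset] at this
        obtain ⟨z, hzB, hz⟩ := this
        refine ⟨z, hzB, fun y hy => ?_⟩
        by_contra hlt
        push_neg at hlt
        exact hz (Set.mem_biUnion hy (mem_ball.mpr hlt))
      choose g hg1 hg2 using sep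
      set s : ℕ → Finset X := fun n => Nat.rec ∅ (fun _ t => insert (g t) t) n with hs
      set x : ℕ → X := fun n => g (s n) with hxdef
      have hxB : ∀ n, x n ∈ B := fun n => hg1 (s n)
      have hmem : ∀ k n, k < n → x k ∈ s n := by
        intro k n hk
        induction n, hk using Nat.le_induction with
        | base => exact Finset.mem_insert_self _ _
        | succ n hn ih => exact Finset.mem_insert_of_mem ih
      have hsep : ∀ k n, k < n → ε ≤ dist (x n) (x k) :=
        fun k n hk => hg2 (s n) (x k) (hmem k n hk)
      -- diagonal subsequence
      set a : ℕ → ℕ := fun n => (chainExtract hB x hxB n).1 n with ha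
      set v : ℕ → X := fun n => x (a n) with hv
      have hamono : StrictMono a := chainExtract_diag_strictMono hB x hxB
      have hvBC : BourbakiCauchySeq v := by
        intro δ hδ
        obtain ⟨k, hk⟩ := exists_nat_one_div_lt hδ
        obtain ⟨m, p, hp⟩ := chainExtract_chain hB x hxB k
        refine ⟨m, k, p, fun n hn => ?_⟩
        obtain ⟨j, hj⟩ := chainExtract_factor hB x hxB k n hn n
        have : v n ∈ chainBall p (1 / (k + 1)) m := by
          rw [hv]; simp only; rw [ha]; simp only; rw [hj]; exact hp j
        exact chainBall_mono_radius hk.le m this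
      obtain ⟨y, hy⟩ := H v hvBC
      have hfreq := mapClusterPt_iff_frequently.mp hy (Metric.ball y (ε / 2)) (ball_mem_nhds y (by linarith))
      obtain ⟨n₁, -, hn₁⟩ := Filter.frequently_atTop.mp hfreq 0
      obtain ⟨n₂, hn₂ge, hn₂⟩ := Filter.frequently_atTop.mp hfreq (n₁ + 1)
      have hlt : a n₁ < a n₂ := hamono (Nat.lt_of_lt_of_le (Nat.lt_succ_self n₁) hn₂ge)
      have : ε ≤ dist (v n₂) (v n₁) := hsep (a n₁) (a n₂) hlt
      have hd : dist (v n₂) (v n₁) < ε := by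
        calc dist (v n₂) (v n₁) ≤ dist (v n₂) y + dist y (v n₁) := dist_triangle _ _ _
          _ < ε / 2 + ε / 2 := by
              have h1 : dist (v n₂) y < ε / 2 := mem_ball.mp hn₂
              have h2 : dist y (v n₁) < ε / 2 := by
                rw [dist_comm]; exact mem_ball.mp hn₁
              linarith
          _ = ε := by ring
      linarith
  · rintro ⟨hc, htb⟩ u hu
    classical
    have hbb : IsBourbakiBounded (Set.range u) := by
      intro ε hε
      obtain ⟨m, n₀, p, hp⟩ := hu ε hε
      refine ⟨m, insert p ((Finset.range n₀).image u), ?_⟩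
      rintro _ ⟨n, rfl⟩
      by_cases hn : n₀ ≤ n
      · exact Set.mem_biUnion (Finset.mem_insert_self _ _) (hp n hn)
      · refine Set.mem_biUnion (Finset.mem_insert_of_mem ?_) (self_mem_chainBall hε m)
        exact Finset.mem_image_of_mem u (Finset.mem_range.mpr (Nat.lt_of_not_le hn))
    have htot : TotallyBounded (Set.range u) := htb _ hbb
    have hcomp : IsCompact (closure (Set.range u)) :=
      TotallyBounded.isCompact_of_isClosed htot.closure isClosed_closure
    obtain ⟨x, -, φ, hφ, hx⟩ :=
      hcomp.tendsto_subseq (fun n => subset_closure (Set.mem_range_self n))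
    exact ⟨x, MapClusterPt.of_comp hφ.tendsto_atTop hx.mapClusterPt⟩
end

section
/- A Banach space is Bourbaki-complete (with the metric induced by its norm) if and only if it is finite dimensional. -/
open Metric Filter Set

lemma chainBall_subset_ball {X : Type*} [PseudoMetricSpace X] (x : X) (ε : ℝ) :
    ∀ m, chainBall x ε m ⊆ Metric.ball x ((m + 1) * ε) := by
  intro m
  induction m with
  | zero => simp [chainBall]
  | succ m ih =>
    rintro z hz
    simp only [chainBall, Set.mem_iUnion] at hz
    obtain ⟨y, hy, hzy⟩ := hz
    have h1 : dist y x < (m + 1) * ε := ih hy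
    have h2 : dist z y < ε := hzy
    have := dist_triangle z y x
    simp only [Metric.mem_ball]
    push_cast
    nlinarith

lemma ball_subset_chainBall {E : Type*} [NormedAddCommGroup E] [NormedSpace ℝ E]
    (x : E) {ε : ℝ} (hε : 0 < ε) :
    ∀ m : ℕ, Metric.ball x ((m + 1) * ε) ⊆ chainBall x ε m := by
  intro m
  induction m with
  | zero => simp [chainBall]
  | succ m ih =>
    intro y hy
    rw [Metric.mem_ball, dist_eq_norm] at hy
    set t : ℝ := ((m : ℝ) + 1) / ((m : ℝ) + 2) with ht
    have hm2 : (0 : ℝ) < (m : ℝ) + 2 := by positivity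
    have ht0 : 0 ≤ t := by positivity
    set z : E := x + t • (y - x) with hz
    have hzx : z - x = t • (y - x) := by simp [hz]
    have hyz : y - z = (1 - t) • (y - x) := by
      rw [hz]; rw [sub_smul, one_smul]; abel
    have h1t : 1 - t = 1 / ((m : ℝ) + 2) := by
      rw [ht]; field_simp; norm_num
    have hycast : ‖y - x‖ < ((m : ℝ) + 2) * ε := by
      push_cast at hy; linarith
    have hz_mem : z ∈ chainBall x ε m := by
      apply ih
      rw [Metric.mem_ball, dist_eq_norm, hzx, norm_smul, Real.norm_eq_abs, abs_of_nonneg ht0]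
      calc t * ‖y - x‖ < t * (((m : ℝ) + 2) * ε) := by
            apply mul_lt_mul_of_pos_left hycast; positivity
        _ = ((m : ℝ) + 1) * ε := by rw [ht]; field_simp
    simp only [chainBall, Set.mem_iUnion]
    refine ⟨z, hz_mem, ?_⟩
    rw [Metric.mem_ball, dist_eq_norm, hyz, norm_smul, Real.norm_eq_abs, h1t,
      abs_of_nonneg (by positivity)]
    calc (1 / ((m : ℝ) + 2)) * ‖y - x‖ < (1 / ((m : ℝ) + 2)) * (((m : ℝ) + 2) * ε) := by
          apply mul_lt_mul_of_pos_left hycast; positivity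
      _ = ε := by field_simp

/-- A Banach space is Bourbaki-complete iff it is finite dimensional. -/
theorem banach_isBourbakiComplete_iff_finiteDimensional
    (E : Type*) [NormedAddCommGroup E] [NormedSpace ℝ E] [CompleteSpace E] :
    IsBourbakiComplete E ↔ FiniteDimensional ℝ E := by
  constructor
  · intro hB
    by_contra h
    obtain ⟨R, f, hR1, hfR, hsep⟩ := exists_seq_norm_le_one_le_norm_sub (𝕜 := ℝ) h
    have hBC : BourbakiCauchySeq f := by
      intro ε hε
      obtain ⟨m, hm⟩ := exists_nat_gt (R / ε)
      refine ⟨m, 0, (0 : E), fun n _ => ?_⟩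
      apply ball_subset_chainBall (0 : E) hε m
      rw [Metric.mem_ball, dist_zero_right]
      have : R < (m : ℝ) * ε := by
        rw [div_lt_iff₀ hε] at hm; linarith
      calc ‖f n‖ ≤ R := hfR n
        _ < ((m : ℝ) + 1) * ε := by nlinarith
    obtain ⟨x, hx⟩ := hB f hBC
    have hfreq : ∃ᶠ n in atTop, f n ∈ Metric.ball x (1 / 2) :=
      (mapClusterPt_iff_frequently.mp hx) _ (Metric.ball_mem_nhds x (by norm_num))
    obtain ⟨n, hn⟩ := hfreq.exists
    obtain ⟨k, hk, hks⟩ := (hfreq.and_eventually (eventually_gt_atTop n)).exists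
    have h1 : 1 ≤ ‖f n - f k‖ := hsep (Nat.ne_of_lt hks)
    have h2 : dist (f n) x < 1 / 2 := hn
    have h3 : dist (f k) x < 1 / 2 := hk
    have h4 := dist_triangle (f n) x (f k)
    rw [dist_comm x (f k)] at h4
    rw [dist_eq_norm] at h4
    linarith
  · intro hfd u hu
    obtain ⟨m, n₀, p, hp⟩ := hu 1 one_pos
    have hK : IsCompact (Metric.closedBall p ((m : ℝ) + 1)) :=
      isCompact_closedBall p _
    have hle : Filter.map u atTop ≤ Filter.principal (Metric.closedBall p ((m : ℝ) + 1)) := by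
      rw [Filter.le_principal_iff, Filter.mem_map]
      filter_upwards [Filter.eventually_ge_atTop n₀] with n hn
      have := chainBall_subset_ball p 1 m (hp n hn)
      rw [Metric.mem_ball] at this
      show u n ∈ Metric.closedBall p ((m : ℝ) + 1)
      rw [Metric.mem_closedBall]
      push_cast at this ⊢
      linarith
    obtain ⟨x, -, hx⟩ := hK.exists_clusterPt hle
    exact ⟨x, hx⟩
end

section
/- A uniform space (X,μ) is uniformly locally compact if and only if it is cofinally complete and locally compact. -/
open Filter Set

/-- The star of a set `A` with respect to a family of sets. -/
def starSet {X : Type*} (U : Set (Set X)) (A : Set X) : Set X :=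
  ⋃ V ∈ {V ∈ U | (V ∩ A).Nonempty}, V

/-- Iterated star: `iterStar U A 0 = A`, `iterStar U A (m+1) = starSet U (iterStar U A m)`. -/
def iterStar {X : Type*} (U : Set (Set X)) (A : Set X) : ℕ → Set X
  | 0 => A
  | m + 1 => starSet U (iterStar U A m)

/-- A family of sets is a uniform cover of a uniform space if it is refined by the
cover of balls of some entourage. -/
def IsUniformCover {X : Type*} [UniformSpace X] (U : Set (Set X)) : Prop :=
  ∃ V ∈ uniformity X, ∀ x : X, ∃ W ∈ U, UniformSpace.ball x V ⊆ W

/-- A filter is cofinally Cauchy if for every uniform cover some member of the cover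
meets every member of the filter. -/
def CofinallyCauchyFilter {X : Type*} [UniformSpace X] (F : Filter X) : Prop :=
  ∀ U : Set (Set X), IsUniformCover U → ∃ W ∈ U, ∀ S ∈ F, (S ∩ W).Nonempty

/-- A uniform space is cofinally complete if every (proper) cofinally Cauchy filter
has a cluster point. -/
def CofinallyComplete (X : Type*) [UniformSpace X] : Prop :=
  ∀ F : Filter X, F.NeBot → CofinallyCauchyFilter F → ∃ x : X, ClusterPt x F

/-- A uniform space is uniformly locally compact if some uniform cover consists of
sets with compact closure. -/
def UniformlyLocallyCompact (X : Type*) [UniformSpace X] : Prop :=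
  ∃ U : Set (Set X), IsUniformCover U ∧ ∀ W ∈ U, IsCompact (closure W)

private lemma closure_ball_subset' {X : Type*} [UniformSpace X] {V₁ V₀ : Set (X × X)}
    (hV₁ : V₁ ∈ uniformity X) (hsymm : SetRel.IsSymm V₁) (hcomp : SetRel.comp V₁ V₁ ⊆ V₀) (x : X) :
    closure (UniformSpace.ball x V₁) ⊆ UniformSpace.ball x V₀ := by
  intro z hz
  rcases mem_closure_iff_nhds.mp hz (UniformSpace.ball z V₁)
    (UniformSpace.ball_mem_nhds z hV₁) with ⟨w, hw₁, hw₂⟩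
  exact hcomp (SetRel.prodMk_mem_comp hw₂ ((SetRel.comm (R := V₁)).mp hw₁))

private lemma exists_noncluster_filter {X : Type*} [UniformSpace X] {s : Set X}
    (hcl : IsClosed s) (hs : ¬ IsCompact s) :
    ∃ G : Filter X, G.NeBot ∧ s ∈ G ∧ ∀ p : X, ¬ ClusterPt p G := by
  have h : ∃ G : Filter X, G.NeBot ∧ G ≤ 𝓟 s ∧ ∀ p ∈ s, ¬ ClusterPt p G := by
    by_contra h
    push_neg at h
    exact hs fun f hf hle => h f hf hle
  obtain ⟨G, hne, hle, hcl'⟩ := h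
  refine ⟨G, hne, le_principal_iff.mp hle, fun p hp => ?_⟩
  have hps : p ∈ s := by
    have : ClusterPt p (𝓟 s) := hp.mono hle
    simpa [hcl.closure_eq] using mem_closure_iff_clusterPt.mpr this
  exact hcl' p hps hp

/-- A uniform space is uniformly locally compact iff it is cofinally complete and
locally compact (every point has a neighborhood with compact closure). -/
theorem uniformlyLocallyCompact_iff (X : Type*) [UniformSpace X] :
    UniformlyLocallyCompact X ↔
      CofinallyComplete X ∧ ∀ x : X, ∃ s ∈ nhds x, IsCompact (closure s) := by
  constructor
  · rintro ⟨U, ⟨V, hV, hcov⟩, hcpt⟩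
    constructor
    · intro F hF hCC
      obtain ⟨W, hWU, hWF⟩ := hCC U ⟨V, hV, hcov⟩
      have h1 : (F ⊓ 𝓟 (closure W)).NeBot := by
        rw [inf_principal_neBot_iff]
        intro S hS
        obtain ⟨y, hy⟩ := hWF S hS
        exact ⟨y, hy.1, subset_closure hy.2⟩
      obtain ⟨p, hpK, hp⟩ := (hcpt W hWU) (f := F ⊓ 𝓟 (closure W)) inf_le_right
      exact ⟨p, hp.mono inf_le_left⟩
    · intro x
      obtain ⟨W, hWU, hball⟩ := hcov x
      exact ⟨UniformSpace.ball x V, UniformSpace.ball_mem_nhds x hV,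
        (hcpt W hWU).of_isClosed_subset isClosed_closure (closure_mono hball)⟩
  · rintro ⟨hcc, hlc⟩
    by_contra hn
    have hA : ∀ V ∈ uniformity X, ∃ x : X, ¬ IsCompact (closure (UniformSpace.ball x V)) := by
      intro V hV
      by_contra h
      push_neg at h
      exact hn ⟨{S | ∃ x : X, S = UniformSpace.ball x V},
        ⟨V, hV, fun x => ⟨_, ⟨x, rfl⟩, subset_rfl⟩⟩,
        by rintro W ⟨x, rfl⟩; exact h x⟩
    -- index of all "bad" pairs
    let I := {p : Set (X × X) × X //
        p.1 ∈ uniformity X ∧ ¬ IsCompact (closure (UniformSpace.ball p.2 p.1))}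
    have hGex : ∀ i : I,
        ∃ G : Filter X, G.NeBot ∧ closure (UniformSpace.ball i.1.2 i.1.1) ∈ G ∧
          ∀ p : X, ¬ ClusterPt p G := by
      rintro ⟨⟨V, x⟩, hV, hx⟩
      exact exists_noncluster_filter isClosed_closure hx
    choose G hGne hGmem hGcl using hGex
    set F : Filter X := ⨆ i : I, G i with hFdef
    have hmemF : ∀ {S : Set X}, S ∈ F ↔ ∀ i : I, S ∈ G i := fun {S} => mem_iSup
    have hInonempty : Nonempty I := by
      obtain ⟨x₀, hx₀⟩ := hA univ univ_mem
      exact ⟨⟨(univ, x₀), univ_mem, hx₀⟩⟩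
    have hFne : F.NeBot := by
      refine ⟨fun h => ?_⟩
      have hemp : (∅ : Set X) ∈ F := empty_mem_iff_bot.mpr h
      exact (hGne hInonempty.some).ne (empty_mem_iff_bot.mp (hmemF.mp hemp hInonempty.some))
    have hFcc : CofinallyCauchyFilter F := by
      rintro U ⟨V₀, hV₀, hcov⟩
      obtain ⟨V₁, hV₁, hsymm, hcomp⟩ := comp_symm_mem_uniformity_sets hV₀
      obtain ⟨x, hx⟩ := hA V₁ hV₁
      obtain ⟨W, hWU, hWb⟩ := hcov x
      refine ⟨W, hWU, fun S hS => ?_⟩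
      have h1 : S ∩ closure (UniformSpace.ball x V₁) ∈ G ⟨(V₁, x), hV₁, hx⟩ :=
        inter_mem (hmemF.mp hS _) (hGmem ⟨(V₁, x), hV₁, hx⟩)
      obtain ⟨y, hyS, hyc⟩ := (hGne ⟨(V₁, x), hV₁, hx⟩).nonempty_of_mem h1
      exact ⟨y, hyS, hWb (closure_ball_subset' hV₁ hsymm hcomp x hyc)⟩
    obtain ⟨p, hp⟩ := hcc F hFne hFcc
    obtain ⟨N, hN, hK⟩ := hlc p
    have hSex : ∀ i : I, ∃ S ∈ G i, S ∩ closure N = ∅ := by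
      intro i
      by_contra h
      push_neg at h
      have hne : (G i ⊓ 𝓟 (closure N)).NeBot := by
        rw [inf_principal_neBot_iff]
        intro S hS
        exact h S hS
      obtain ⟨q, hqK, hq⟩ := hK (f := G i ⊓ 𝓟 (closure N)) inf_le_right
      exact hGcl i q (hq.mono inf_le_left)
    choose S hSmem hSdisj using hSex
    have hD : (⋃ i : I, S i) ∈ F :=
      hmemF.mpr fun i => mem_of_superset (hSmem i) (subset_iUnion S i)
    have h1 : N ∩ ⋃ i : I, S i ∈ nhds p ⊓ F := inter_mem_inf hN hD
    obtain ⟨y, hyN, hyD⟩ := hp.nonempty_of_mem h1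
    obtain ⟨i, hyT⟩ := mem_iUnion.mp hyD
    have hy2 : y ∈ S i ∩ closure N := ⟨hyT, subset_closure hyN⟩
    rw [hSdisj i] at hy2
    exact hy2
end

section
/- For a metric space (X,d), the completion of (X,d) is Bourbaki-complete if and only if every Bourbaki-Cauchy sequence of (X,d) has a Cauchy subsequence. -/
open Metric Filter Set

open Topology


open UniformSpace in
lemma chainBall_mono {X : Type*} [PseudoMetricSpace X] {p : X} {e1 e2 : ℝ} (h : e1 ≤ e2) :
    ∀ m, chainBall p e1 m ⊆ chainBall p e2 m
  | 0 => Metric.ball_subset_ball h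
  | m + 1 => by
    intro x hx
    simp only [chainBall, Set.mem_iUnion] at hx ⊢
    obtain ⟨y, hy, hxy⟩ := hx
    exact ⟨y, chainBall_mono h m hy, Metric.ball_subset_ball h hxy⟩

open UniformSpace in
lemma chainBall_coe {X : Type*} [MetricSpace X] {p : X} {ε : ℝ} :
    ∀ m (x : X), x ∈ chainBall p ε m →
      (↑x : Completion X) ∈ chainBall (↑p : Completion X) ε m
  | 0, x, hx => by
    simpa [chainBall, Completion.dist_eq] using hx
  | m + 1, x, hx => by
    simp only [chainBall, Set.mem_iUnion] at hx ⊢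
    obtain ⟨y, hy, hxy⟩ := hx
    exact ⟨↑y, chainBall_coe m y hy, by simpa [Completion.dist_eq] using hxy⟩

open UniformSpace in
lemma chainBall_approx {X : Type*} [MetricSpace X] {ε δ : ℝ} (hδ : 0 < δ)
    {p : X} {q : Completion X} (hp : dist (↑p : Completion X) q < δ) :
    ∀ m (v : Completion X), v ∈ chainBall q ε m → ∀ x : X,
      dist (↑x : Completion X) v < δ → x ∈ chainBall p (ε + 2 * δ) m
  | 0, v, hv, x, hx => by
    simp only [chainBall, Metric.mem_ball] at hv ⊢
    have : dist x p = dist (↑x : Completion X) (↑p) := (Completion.dist_eq x p).symm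
    rw [this]
    calc dist (↑x : Completion X) ↑p ≤ dist (↑x : Completion X) v + dist v q + dist q ↑p :=
          dist_triangle4 _ _ _ _
      _ < δ + ε + δ := by
          have := dist_comm q (↑p : Completion X) ▸ hp
          exact add_lt_add (add_lt_add hx hv) this
      _ = ε + 2 * δ := by ring
  | m + 1, v, hv, x, hx => by
    simp only [chainBall, Set.mem_iUnion] at hv
    obtain ⟨w, hw, hvw⟩ := hv
    obtain ⟨y, hy⟩ : ∃ y : X, dist w (↑y : Completion X) < δ :=
      Metric.denseRange_iff.mp (Completion.denseRange_coe) w δ hδ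
    have hy' : dist (↑y : Completion X) w < δ := by rwa [dist_comm] at hy
    have hyc := chainBall_approx hδ hp m w hw y hy'
    simp only [chainBall, Set.mem_iUnion]
    refine ⟨y, hyc, ?_⟩
    have : dist x y = dist (↑x : Completion X) (↑y) := (Completion.dist_eq x y).symm
    rw [Metric.mem_ball, this]
    calc dist (↑x : Completion X) ↑y ≤ dist (↑x : Completion X) v + dist v w + dist w ↑y :=
          dist_triangle4 _ _ _ _
      _ < δ + ε + δ := add_lt_add (add_lt_add hx (Metric.mem_ball.mp hvw)) hy
      _ = ε + 2 * δ := by ring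

/-- The completion of a metric space is Bourbaki-complete iff every Bourbaki-Cauchy
sequence of the space has a Cauchy subsequence. -/
theorem completion_bourbakiComplete_iff_cauchy_subseq (X : Type*) [MetricSpace X] :
    IsBourbakiComplete (UniformSpace.Completion X) ↔
      ∀ u : ℕ → X, BourbakiCauchySeq u →
        ∃ φ : ℕ → ℕ, StrictMono φ ∧ CauchySeq (u ∘ φ) := by

  constructor
  · intro h u hu
    have hbc : BourbakiCauchySeq (fun n => (↑(u n) : UniformSpace.Completion X)) := by
      intro ε hε
      obtain ⟨m, n₀, p, hp⟩ := hu ε hε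
      exact ⟨m, n₀, ↑p, fun n hn => chainBall_coe m (u n) (hp n hn)⟩
    obtain ⟨x, hx⟩ := h _ hbc
    obtain ⟨φ, hφ, hφt⟩ := TopologicalSpace.FirstCountableTopology.tendsto_subseq hx
    refine ⟨φ, hφ, ?_⟩
    have hcs : CauchySeq (fun n => (↑(u (φ n)) : UniformSpace.Completion X)) := hφt.cauchySeq
    rw [Metric.cauchySeq_iff] at hcs ⊢
    intro ε hε
    obtain ⟨N, hN⟩ := hcs ε hε
    exact ⟨N, fun a ha b hb => by
      have := hN a ha b hb
      rwa [UniformSpace.Completion.dist_eq] at this⟩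
  · intro h v hv
    have hex : ∀ n : ℕ, ∃ y : X, dist (v n) (↑y : UniformSpace.Completion X) < 1 / (n + 1) :=
      fun n => Metric.denseRange_iff.mp UniformSpace.Completion.denseRange_coe (v n)
        (1 / (n + 1)) (by positivity)
    choose u hu using hex
    have hub : BourbakiCauchySeq u := by
      intro ε hε
      have hε4 : (0 : ℝ) < ε / 4 := by linarith
      obtain ⟨m, n₀, q, hq⟩ := hv (ε / 4) hε4
      obtain ⟨p, hp⟩ : ∃ p : X, dist q (↑p : UniformSpace.Completion X) < ε / 4 :=
        Metric.denseRange_iff.mp UniformSpace.Completion.denseRange_coe q (ε / 4) hε4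
      obtain ⟨N, hN⟩ : ∃ N : ℕ, 1 / ((N : ℝ) + 1) < ε / 4 := by
        obtain ⟨N, hN⟩ := exists_nat_one_div_lt hε4
        exact ⟨N, hN⟩
      refine ⟨m, max n₀ N, p, fun n hn => ?_⟩
      have hn₀ : n ≥ n₀ := le_trans (le_max_left _ _) hn
      have hnN : (N : ℝ) ≤ n := Nat.cast_le.mpr (le_trans (le_max_right _ _) hn)
      have hdist : dist (↑(u n) : UniformSpace.Completion X) (v n) < ε / 4 := by
        rw [dist_comm]
        calc dist (v n) (↑(u n) : UniformSpace.Completion X) < 1 / (n + 1) := hu n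
          _ ≤ 1 / ((N : ℝ) + 1) := by
              apply one_div_le_one_div_of_le (by positivity); linarith
          _ < ε / 4 := hN
      have hp' : dist (↑p : UniformSpace.Completion X) q < ε / 4 := by rwa [dist_comm] at hp
      have := chainBall_approx hε4 hp' m (v n) (hq n hn₀) (u n) hdist
      exact chainBall_mono (by linarith) m this
    obtain ⟨φ, hφ, hφc⟩ := h u hub
    have hcoe : CauchySeq (fun n => (↑(u (φ n)) : UniformSpace.Completion X)) :=
      (UniformSpace.Completion.uniformContinuous_coe X).comp_cauchySeq hφc
    obtain ⟨x, hx⟩ := cauchySeq_tendsto_of_complete hcoe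
    have hd0 : Tendsto (fun n => dist (v (φ n)) (↑(u (φ n)) : UniformSpace.Completion X))
        atTop (𝓝 0) := by
      apply squeeze_zero (fun n => dist_nonneg) (fun n => (hu (φ n)).le)
      have : Tendsto (fun n : ℕ => 1 / ((n : ℝ) + 1)) atTop (𝓝 0) :=
        tendsto_one_div_add_atTop_nhds_zero_nat
      refine this.comp (hφ.tendsto_atTop) |>.congr fun n => rfl
    have hvt : Tendsto (fun n => v (φ n)) atTop (𝓝 x) := by
      rw [tendsto_iff_dist_tendsto_zero]
      apply squeeze_zero (fun n => dist_nonneg)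
        (fun n => dist_triangle (v (φ n)) (↑(u (φ n)) : UniformSpace.Completion X) x)
      have h2 : Tendsto (fun n => dist (↑(u (φ n)) : UniformSpace.Completion X) x)
          atTop (𝓝 0) := tendsto_iff_dist_tendsto_zero.mp hx
      simpa using hd0.add h2
    exact ⟨x, MapClusterPt.of_comp hφ.tendsto_atTop hvt.mapClusterPt⟩
end

section
/- Let (X,μ) be a uniform space and B⊆X. Then B is totally bounded if and only if for every point-finite uniform open cover 𝒰 of X there exists a finite subfamily of 𝒰 covering B. -/
open Filter Set Uniformity
open scoped SetRel

lemma isOpen_compRel {X : Type*} [TopologicalSpace X] {s t : Set (X × X)}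
    (hs : IsOpen s) (ht : IsOpen t) : IsOpen (s ○ t) := by
  have heq : s ○ t = ⋃ c : X, ((fun a => (a, c)) ⁻¹' s) ×ˢ ((fun b => (c, b)) ⁻¹' t) := by
    ext ⟨a, b⟩
    simp [SetRel.comp, Set.mem_prod, and_comm]
  rw [heq]
  exact isOpen_iUnion fun c =>
    (hs.preimage (Continuous.prodMk continuous_id continuous_const)).prod
      (ht.preimage (Continuous.prodMk continuous_const continuous_id))

/-- A subset of a uniform space is totally bounded iff every point-finite uniform open
cover of the space contains a finite subfamily covering it. -/
theorem totallyBounded_iff_pointFinite (X : Type*) [UniformSpace X] (B : Set X) :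
    TotallyBounded B ↔
      ∀ U : Set (Set X), IsUniformCover U → (∀ W ∈ U, IsOpen W) →
        (∀ x : X, {W ∈ U | x ∈ W}.Finite) →
        ∃ s ⊆ U, s.Finite ∧ B ⊆ ⋃₀ s := by
  constructor
  · rintro hTB U ⟨V, hV, hball⟩ _ _
    choose f hfU hfb using hball
    obtain ⟨t, htfin, htcov⟩ := hTB (SetRel.symmetrize V) (symmetrize_mem_uniformity hV)
    refine ⟨f '' t, ?_, htfin.image f, ?_⟩
    · rintro _ ⟨y, _, rfl⟩; exact hfU y
    · intro z hz
      obtain ⟨y, hy, hzy⟩ := Set.mem_iUnion₂.mp (htcov hz)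
      exact ⟨f y, Set.mem_image_of_mem f hy, hfb y (hzy.2 : (y, z) ∈ V)⟩
  · intro h
    classical
    by_contra hTB
    rw [TotallyBounded] at hTB
    push_neg at hTB
    obtain ⟨V0, hV0, hV0cov⟩ := hTB
    obtain ⟨t, ht, htsymm, htV0⟩ := comp_comp_symm_mem_uniformity_sets hV0
    obtain ⟨u, hu, husymm, hut⟩ := comp_comp_symm_mem_uniformity_sets ht
    obtain ⟨W, ⟨hW, hWopen, hWsymm⟩, hWu⟩ := uniformity_hasBasis_open_symmetric.mem_iff.mp hu
    set W3 : Set (X × X) := W ○ W ○ W with hW3def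
    set W6 : Set (X × X) := W3 ○ W3 with hW6def
    have hWrefl : ∀ a : X, (a, a) ∈ W := fun a => refl_mem_uniformity hW
    have hW3refl : ∀ a : X, (a, a) ∈ W3 := fun a => ⟨a, ⟨a, hWrefl a, hWrefl a⟩, hWrefl a⟩
    have hW3symm : ∀ a b : X, (a, b) ∈ W3 → (b, a) ∈ W3 := by
      rintro a b ⟨c, ⟨d, had, hdc⟩, hcb⟩
      exact ⟨d, ⟨c, hWsymm.symm _ _ hcb, hWsymm.symm _ _ hdc⟩,
        hWsymm.symm _ _ had⟩
    have hW6symm : ∀ a b : X, (a, b) ∈ W6 → (b, a) ∈ W6 := by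
      rintro a b ⟨c, hac, hcb⟩
      exact ⟨c, hW3symm _ _ hcb, hW3symm _ _ hac⟩
    have hW3t : W3 ⊆ t := (SetRel.comp_subset_comp (SetRel.comp_subset_comp hWu hWu) hWu).trans hut
    have hW6V0 : W6 ⊆ V0 := by
      rintro ⟨a, b⟩ ⟨c, h1, h2⟩
      exact htV0 ⟨b, ⟨c, hW3t h1, hW3t h2⟩, refl_mem_uniformity ht⟩
    -- key existence of separated points
    have key : ∀ T : Finset X, ∃ z, z ∈ B ∧ ∀ y ∈ T, (y, z) ∉ W6 := by
      intro T
      by_contra hk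
      push_neg at hk
      refine hV0cov (↑T) T.finite_toSet ?_
      intro z hz
      obtain ⟨y, hyT, hyz⟩ := hk z hz
      exact Set.mem_iUnion₂.mpr ⟨y, hyT, hW6V0 (hW6symm _ _ hyz)⟩
    choose f hfB hfsep using key
    let F : ℕ → Finset X := fun n => Nat.rec ∅ (fun _ s => insert (f s) s) n
    let x : ℕ → X := fun n => f (F n)
    have hmem : ∀ m n : ℕ, m < n → x m ∈ F n := by
      intro m n
      induction n with
      | zero => intro hmn; exact absurd hmn (Nat.not_lt_zero m)
      | succ n ih =>
        intro hmn
        have hFs : F (n + 1) = insert (x n) (F n) := rfl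
        rw [hFs, Finset.mem_insert]
        rcases Nat.lt_succ_iff_lt_or_eq.mp hmn with hc | hc
        · exact Or.inr (ih hc)
        · subst hc; exact Or.inl rfl
    have hxB : ∀ n, x n ∈ B := fun n => (hfB (F n))
    have hsep : ∀ m n : ℕ, m ≠ n → (x m, x n) ∉ W6 := by
      intro m n hmn hmem6
      rcases Nat.lt_or_ge m n with hc | hc
      · exact hfsep (F n) (x m) (hmem m n hc) hmem6
      · have hc' : n < m := lt_of_le_of_ne hc (Ne.symm hmn)
        exact hfsep (F m) (x n) (hmem n m hc') (hW6symm _ _ hmem6)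
    set S : Set X := Set.range x with hSdef
    set G : Set (Set X) :=
      (Set.range fun n => UniformSpace.ball (x n) W3) ∪ {(closure S)ᶜ} with hGdef
    have hGopen : ∀ A ∈ G, IsOpen A := by
      rintro A (⟨n, rfl⟩ | rfl)
      · exact UniformSpace.isOpen_ball _ (isOpen_compRel (isOpen_compRel hWopen hWopen) hWopen)
      · exact isClosed_closure.isOpen_compl
    have hGcover : IsUniformCover G := by
      refine ⟨W, hW, fun z => ?_⟩
      by_cases hz : ∃ y ∈ UniformSpace.ball z W, y ∈ closure S
      · obtain ⟨y, hyz, hyS⟩ := hz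
        obtain ⟨p, hpW, hpS⟩ := mem_closure_iff_nhds.mp hyS _ (UniformSpace.ball_mem_nhds y hW)
        rw [hSdef] at hpS
        obtain ⟨n, rfl⟩ := hpS
        refine ⟨UniformSpace.ball (x n) W3, Set.mem_union_left _ ⟨n, rfl⟩, ?_⟩
        intro w hw
        exact ⟨z, ⟨y, hWsymm.symm _ _ hpW, hWsymm.symm _ _ hyz⟩, hw⟩
      · push_neg at hz
        exact ⟨(closure S)ᶜ, Set.mem_union_right _ rfl, fun w hw => hz w hw⟩
    have hGpf : ∀ z : X, {A ∈ G | z ∈ A}.Finite := by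
      intro z
      have h1 : {A ∈ G | z ∈ A} ⊆
          {A | A ∈ (Set.range fun n => UniformSpace.ball (x n) W3) ∧ z ∈ A} ∪
            {(closure S)ᶜ} := by
        rintro A ⟨(hA | hA), hzA⟩
        · exact Or.inl ⟨hA, hzA⟩
        · exact Or.inr hA
      refine (Set.Finite.union ?_ (Set.finite_singleton _)).subset h1
      apply Set.Subsingleton.finite
      rintro A ⟨⟨n, rfl⟩, hzn⟩ A' ⟨⟨m, rfl⟩, hzm⟩
      have hnm : n = m := by
        by_contra hne
        exact hsep n m hne ⟨z, hzn, hW3symm _ _ hzm⟩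
      rw [hnm]
    obtain ⟨s, hsG, hsfin, hscov⟩ := h G hGcover hGopen hGpf
    have hinj : ∀ n m : ℕ,
        UniformSpace.ball (x n) W3 = UniformSpace.ball (x m) W3 → n = m := by
      intro n m hnm
      by_contra hne
      have hxn : x n ∈ UniformSpace.ball (x m) W3 := by
        rw [← hnm]; exact hW3refl (x n)
      exact hsep m n (Ne.symm hne) ⟨x n, hxn, hW3refl (x n)⟩
    have hTfin : {n : ℕ | UniformSpace.ball (x n) W3 ∈ s}.Finite := by
      have hio : Set.InjOn (fun n => UniformSpace.ball (x n) W3)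
          {n | UniformSpace.ball (x n) W3 ∈ s} := fun a _ b _ hab => hinj a b hab
      refine Set.Finite.of_finite_image (hsfin.subset ?_) hio
      rintro _ ⟨n, hn, rfl⟩
      exact hn
    obtain ⟨N, hN⟩ := hTfin.infinite_compl.nonempty
    obtain ⟨A, hAs, hNA⟩ := Set.mem_sUnion.mp (hscov (hxB N))
    rcases hsG hAs with hA | hA
    · obtain ⟨n, rfl⟩ := hA
      have hns : n ∈ {k : ℕ | UniformSpace.ball (x k) W3 ∈ s} := hAs
      have hnN : n ≠ N := fun hE => hN (hE ▸ hns)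
      exact hsep n N hnN ⟨x N, hNA, hW3refl (x N)⟩
    · rw [Set.mem_singleton_iff] at hA
      subst hA
      exact hNA (subset_closure (by rw [hSdef]; exact ⟨N, rfl⟩))
end

section
/- Let B be a subset of a uniform space (X,μ). Then B is totally bounded if and only if every ultrafilter containing B is a Cauchy filter, if and only if every filter containing B is cofinally Cauchy. -/
open Filter Set

/-- A subset is totally bounded iff every ultrafilter containing it is Cauchy, iff
every proper filter containing it is cofinally Cauchy. -/
theorem totallyBounded_iff_filters (X : Type*) [UniformSpace X] (B : Set X) :
    (TotallyBounded B ↔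
      ∀ F : Ultrafilter X, B ∈ F → Cauchy (F : Filter X)) ∧
    (TotallyBounded B ↔
      ∀ F : Filter X, F.NeBot → B ∈ F → CofinallyCauchyFilter F) := by
  have h1 : TotallyBounded B ↔ ∀ F : Ultrafilter X, B ∈ F → Cauchy (F : Filter X) := by
    rw [totallyBounded_iff_ultrafilter]
    exact ⟨fun h F hBF => h F (le_principal_iff.mpr hBF),
           fun h F hF => h F (le_principal_iff.mp hF)⟩
  refine ⟨h1, ?_, ?_⟩
  · -- totally bounded → every proper filter containing B is cofinally Cauchy
    intro hTB F hne hBF U hU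
    obtain ⟨V, hV, hball⟩ := hU
    obtain ⟨V₀, hV₀, hsymm, hcomp⟩ := comp_symm_mem_uniformity_sets hV
    obtain ⟨t, htf, htcov⟩ := hTB V₀ hV₀
    choose W hWU hWsub using hball
    by_contra hcon
    push_neg at hcon
    choose S hSF hSW using fun y : X => hcon (W y) (hWU y)
    have hbig : B ∩ ⋂ y ∈ t, S y ∈ F :=
      Filter.inter_mem hBF ((Filter.biInter_mem htf).mpr fun y _ => hSF y)
    obtain ⟨x, hxB, hxS⟩ := Filter.nonempty_of_mem hbig
    obtain ⟨y, hyt, hxy⟩ := mem_iUnion₂.mp (htcov hxB)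
    have hxW : x ∈ W y := by
      apply hWsub y
      exact hcomp (SetRel.prodMk_mem_comp (refl_mem_uniformity hV₀)
        ((SetRel.comm (R := V₀)).mp hxy))
    have hxSy : x ∈ S y := mem_iInter₂.mp hxS y hyt
    have hx : x ∈ S y ∩ W y := ⟨hxSy, hxW⟩
    rw [hSW y] at hx
    exact hx
  · -- (cofinal condition) → totally bounded, via the ultrafilter criterion
    intro h
    apply h1.mpr
    intro F hBF
    have hcc : CofinallyCauchyFilter (F : Filter X) := h F F.neBot hBF
    rw [cauchy_iff]
    refine ⟨F.neBot, fun s hs => ?_⟩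
    obtain ⟨V₀, hV₀, hsymm, hcomp⟩ := comp_symm_mem_uniformity_sets hs
    have hcover : IsUniformCover {S | ∃ x : X, S = UniformSpace.ball x V₀} :=
      ⟨V₀, hV₀, fun x => ⟨UniformSpace.ball x V₀, ⟨x, rfl⟩, subset_rfl⟩⟩
    obtain ⟨Wb, ⟨x, rfl⟩, hmeets⟩ := hcc _ hcover
    have hWF : UniformSpace.ball x V₀ ∈ (F : Filter X) := by
      by_contra hnot
      have hcmem : (UniformSpace.ball x V₀)ᶜ ∈ F := Ultrafilter.compl_mem_iff_notMem.mpr hnot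
      obtain ⟨z, hz1, hz2⟩ := hmeets _ hcmem
      exact hz1 hz2
    refine ⟨_, hWF, ?_⟩
    rintro ⟨a, b⟩ ⟨ha, hb⟩
    exact hcomp (SetRel.prodMk_mem_comp ((SetRel.comm (R := V₀)).mp ha) hb)
end

section
/- The metric hedgehog H(κ) with κ≥ω_0 spines is a Bourbaki-bounded, complete metric space that is not totally bounded; in particular, for infinite κ it is complete but not Bourbaki-complete. -/
open Metric Filter Set Topology

/-- The metric hedgehog with spine set `A`, realized isometrically inside
`ℓ¹(A)` as the segments `[0,1] • (single α)`: the distance between `x • e α`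
and `y • e β` is `|x - y|` if `α = β` and `x + y` otherwise. -/
noncomputable def Hedgehog (A : Type) [DecidableEq A] : Set (lp (fun _ : A => ℝ) 1) :=
  {f | ∃ (α : A) (x : ℝ), x ∈ Set.Icc (0 : ℝ) 1 ∧ f = lp.single 1 α x}

namespace HH
variable {A : Type} [DecidableEq A]

lemma norm_single (α : A) (x : ℝ) : ‖(lp.single 1 α x : lp (fun _ : A => ℝ) 1)‖ = |x| := by
  have := lp.norm_single (p := 1) (E := fun _ : A => ℝ) (by norm_num) α x
  simpa using this

lemma single_sub (α : A) (x y : ℝ) :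
    (lp.single 1 α x : lp (fun _ : A => ℝ) 1) - lp.single 1 α y = lp.single 1 α (x - y) := by
  ext j; by_cases h : j = α <;> simp [lp.single_apply, h]

lemma single_zero (α : A) : (lp.single 1 α (0:ℝ) : lp (fun _ : A => ℝ) 1) = 0 := by
  ext j; by_cases h : j = α <;> simp [lp.single_apply, h]

lemma dist_single_same (α : A) (x y : ℝ) :
    dist (lp.single 1 α x : lp (fun _ : A => ℝ) 1) (lp.single 1 α y) = |x - y| := by
  rw [dist_eq_norm, single_sub, norm_single]

lemma dist_single_ne {α β : A} (h : α ≠ β) (x y : ℝ) :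
    dist (lp.single 1 α x : lp (fun _ : A => ℝ) 1) (lp.single 1 β y) = |x| + |y| := by
  classical
  set f : A → ℝ := fun i => if i = α then x else if i = β then -y else 0 with hfdef
  have h1 : f α = x := by simp [hfdef]
  have h2 : f β = -y := by simp [hfdef, h.symm]
  have hsum : (∑ i ∈ ({α, β} : Finset A), (lp.single 1 i (f i) : lp (fun _ : A => ℝ) 1))
      = lp.single 1 α x - lp.single 1 β y := by
    rw [Finset.sum_pair h, h1, h2, lp.single_neg, sub_eq_add_neg]
  have key := lp.norm_sum_single (p := 1) (E := fun _ : A => ℝ) (by norm_num) f ({α, β} : Finset A)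
  rw [hsum, Finset.sum_pair h] at key
  rw [dist_eq_norm]
  simpa [h1, h2, Real.norm_eq_abs] using key

lemma zero_mem [Nonempty A] : (0 : lp (fun _ : A => ℝ) 1) ∈ Hedgehog A :=
  ⟨Classical.arbitrary A, 0, by norm_num, (single_zero _).symm⟩

/-- the center of the hedgehog -/
noncomputable def c [Nonempty A] : ↥(Hedgehog A) := ⟨0, zero_mem⟩

lemma chainBall_succ_of_mem {X : Type*} [PseudoMetricSpace X] {x z : X} {ε : ℝ} (hε : 0 < ε)
    {m : ℕ} (h : z ∈ chainBall x ε m) : z ∈ chainBall x ε (m + 1) := by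
  show z ∈ Set.iUnion _
  exact Set.mem_iUnion.2 ⟨z, Set.mem_iUnion.2 ⟨h, mem_ball_self hε⟩⟩

lemma chain_aux [Nonempty A] {ε : ℝ} (hε : 0 < ε) :
    ∀ (k : ℕ) (z : ↥(Hedgehog A)), ‖(z : lp (fun _ : A => ℝ) 1)‖ ≤ k * (ε / 2) →
      z ∈ chainBall (c (A := A)) ε k := by
  intro k
  induction k with
  | zero =>
    intro z hz
    show z ∈ Metric.ball _ _
    rw [mem_ball, Subtype.dist_eq]
    calc dist (z : lp (fun _ : A => ℝ) 1) 0 = ‖(z : lp (fun _ : A => ℝ) 1)‖ := by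
          rw [dist_zero_right]
      _ ≤ 0 := by simpa using hz
      _ < ε := hε
  | succ k ih =>
    intro z hz
    obtain ⟨α, x, ⟨hx0, hx1⟩, hzx⟩ := z.2
    have hnz : ‖(z : lp (fun _ : A => ℝ) 1)‖ = x := by
      rw [hzx, norm_single, abs_of_nonneg hx0]
    by_cases hx : x ≤ k * (ε / 2)
    · exact chainBall_succ_of_mem hε (ih z (by rw [hnz]; exact hx))
    · push_neg at hx
      set t : ℝ := k * (ε / 2) with ht
      have ht0 : 0 ≤ t := by positivity
      have ht1 : t ≤ 1 := le_trans (le_of_lt hx) hx1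
      set y : ↥(Hedgehog A) := ⟨lp.single 1 α t, α, t, ⟨ht0, ht1⟩, rfl⟩ with hy
      have hyc : y ∈ chainBall (c (A := A)) ε k := by
        apply ih
        rw [norm_single, abs_of_nonneg ht0]
      have hd : dist z y < ε := by
        rw [Subtype.dist_eq, hzx]
        show dist (lp.single 1 α x : lp (fun _ : A => ℝ) 1) (lp.single 1 α t) < ε
        rw [dist_single_same, abs_of_nonneg (by linarith)]
        have : x ≤ (k + 1) * (ε / 2) := by rw [← hnz]; exact_mod_cast hz
        linarith
      exact Set.mem_iUnion.2 ⟨y, Set.mem_iUnion.2 ⟨hyc, hd⟩⟩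

lemma chain_key [Nonempty A] {ε : ℝ} (hε : 0 < ε) :
    ∃ m : ℕ, ∀ z : ↥(Hedgehog A), z ∈ chainBall (c (A := A)) ε m := by
  refine ⟨⌈2 / ε⌉₊, fun z => chain_aux hε _ z ?_⟩
  obtain ⟨α, x, ⟨hx0, hx1⟩, hzx⟩ := z.2
  have hnz : ‖(z : lp (fun _ : A => ℝ) 1)‖ = x := by
    rw [hzx, norm_single, abs_of_nonneg hx0]
  have h1 : (2 / ε) * (ε / 2) = 1 := by field_simp
  have h2 : (2 / ε) ≤ (⌈2 / ε⌉₊ : ℝ) := Nat.le_ceil _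
  have := mul_le_mul_of_nonneg_right h2 (by positivity : (0:ℝ) ≤ ε / 2)
  rw [h1] at this
  rw [hnz]; linarith

set_option synthInstance.maxHeartbeats 1000000 in
lemma isClosed_hedgehog [Nonempty A] : IsClosed (Hedgehog A) := by
  apply IsSeqClosed.isClosed
  intro g f hg hf
  choose α x hx hgx using hg
  by_cases hf0 : f = 0
  · exact ⟨Classical.arbitrary A, 0, by norm_num, by rw [hf0, single_zero]⟩
  · have hnf : 0 < ‖f‖ := norm_pos_iff.mpr hf0
    have hxn : ∀ n, ‖g n‖ = x n := fun n => by
      rw [hgx n, norm_single, abs_of_nonneg (hx n).1]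
    have hnorm : Tendsto (fun n => ‖g n‖) atTop (𝓝 ‖f‖) := hf.norm
    have hxt : Tendsto x atTop (𝓝 ‖f‖) := by
      simpa only [funext hxn] using hnorm
    have hev1 : ∀ᶠ n in atTop, ‖f‖ / 2 < x n := hxt.eventually (eventually_gt_nhds (by linarith))
    have hev2 : ∀ᶠ n in atTop, dist (g n) f < ‖f‖ / 2 := by
      obtain ⟨N, hN⟩ := Metric.tendsto_atTop.mp hf (‖f‖ / 2) (by linarith)
      exact eventually_atTop.2 ⟨N, hN⟩
    obtain ⟨N, hN⟩ := (hev1.and hev2).exists_forall_of_atTop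
    have hα : ∀ n ≥ N, α n = α N := by
      intro n hn
      by_contra hne
      have hd : dist (g n) (g N) = x n + x N := by
        rw [hgx n, hgx N, dist_single_ne hne, abs_of_nonneg (hx n).1, abs_of_nonneg (hx N).1]
      have h1 := (hN n hn).1
      have h2 := (hN n hn).2
      have h3 := (hN N le_rfl).1
      have h4 := (hN N le_rfl).2
      have : dist (g n) (g N) ≤ dist (g n) f + dist f (g N) := dist_triangle _ _ _
      rw [dist_comm f (g N)] at this
      rw [hd] at this
      linarith
    have hgN : ∀ᶠ n in atTop, g n = lp.single 1 (α N) (x n) := by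
      filter_upwards [eventually_ge_atTop N] with n hn
      rw [hgx n, hα n hn]
    have hlim : Tendsto (fun n => (lp.single 1 (α N) (x n) : lp (fun _ : A => ℝ) 1)) atTop
        (𝓝 (lp.single 1 (α N) ‖f‖)) := by
      rw [tendsto_iff_dist_tendsto_zero]
      have : ∀ n, dist (lp.single 1 (α N) (x n) : lp (fun _ : A => ℝ) 1)
          (lp.single 1 (α N) ‖f‖) = |x n - ‖f‖| := fun n => dist_single_same _ _ _
      simp only [this]
      have := (hxt.sub_const ‖f‖).abs
      simpa using this
    have hfe : f = lp.single 1 (α N) ‖f‖ :=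
      tendsto_nhds_unique (hf.congr' hgN) hlim
    have hle : ‖f‖ ≤ 1 := le_of_tendsto hxt (Eventually.of_forall (fun n => (hx n).2))
    exact ⟨α N, ‖f‖, ⟨norm_nonneg f, hle⟩, hfe⟩

/-- spine tips -/
noncomputable def pt (α : A) : ↥(Hedgehog A) :=
  ⟨lp.single 1 α 1, α, 1, ⟨by norm_num, le_refl 1⟩, rfl⟩

lemma dist_pt {α β : A} (h : α ≠ β) : dist (pt α) (pt β) = 2 := by
  rw [Subtype.dist_eq]
  show dist (lp.single 1 α (1:ℝ) : lp (fun _ : A => ℝ) 1) (lp.single 1 β 1) = 2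
  rw [dist_single_ne h]; norm_num

end HH

/-- The metric hedgehog with infinitely many spines is a Bourbaki-bounded complete
metric space that is not totally bounded; in particular it is complete but not
Bourbaki-complete. -/
theorem hedgehog_properties (A : Type) [DecidableEq A] [Infinite A] :
    IsBourbakiBounded (Set.univ : Set ↥(Hedgehog A)) ∧
    CompleteSpace ↥(Hedgehog A) ∧
    ¬ TotallyBounded (Set.univ : Set ↥(Hedgehog A)) ∧
    ¬ IsBourbakiComplete ↥(Hedgehog A) := by
  have hNE : Nonempty A := inferInstance
  refine ⟨?_, ?_, ?_, ?_⟩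
  · intro ε hε
    obtain ⟨m, hm⟩ := HH.chain_key (A := A) hε
    refine ⟨m, {HH.c}, fun z _ => ?_⟩
    simp only [Finset.mem_singleton, Set.iUnion_iUnion_eq_left]
    exact hm z
  · exact (HH.isClosed_hedgehog (A := A)).completeSpace_coe
  · intro htb
    obtain ⟨t, htf, hcov⟩ := (totallyBounded_iff.mp htb) 1 one_pos
    have hmem : ∀ α : A, ∃ y ∈ t, HH.pt α ∈ Metric.ball y 1 := by
      intro α
      have := hcov (Set.mem_univ (HH.pt α))
      simpa using this
    choose y hy hball using hmem
    have : Finite ↥t := htf.to_subtype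
    obtain ⟨α, β, hne, hyeq'⟩ :=
      Finite.exists_ne_map_eq_of_infinite (fun α : A => (⟨y α, hy α⟩ : ↥t))
    have hyeq : y α = y β := Subtype.ext_iff.mp hyeq'
    have h1 : dist (HH.pt α) (y α) < 1 := mem_ball.mp (hball α)
    have h2 : dist (HH.pt β) (y β) < 1 := mem_ball.mp (hball β)
    have := dist_triangle (HH.pt α) (y α) (HH.pt β)
    rw [HH.dist_pt hne, dist_comm (y α) (HH.pt β), hyeq] at this
    rw [hyeq] at h1
    linarith
  · intro hbc
    set e : ℕ ↪ A := Infinite.natEmbedding A with he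
    set u : ℕ → ↥(Hedgehog A) := fun n => HH.pt (e n) with hu
    have hcauchy : BourbakiCauchySeq u := by
      intro ε hε
      obtain ⟨m, hm⟩ := HH.chain_key (A := A) hε
      exact ⟨m, 0, HH.c, fun n _ => hm (u n)⟩
    obtain ⟨z, hz⟩ := hbc u hcauchy
    have hfreq : ∃ᶠ n in atTop, u n ∈ Metric.ball z 1 :=
      (mapClusterPt_iff_frequently.mp hz) _ (ball_mem_nhds z one_pos)
    obtain ⟨n, hn⟩ := hfreq.exists
    obtain ⟨m, hmball, hmgt⟩ := (hfreq.and_eventually (eventually_gt_atTop n)).exists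
    have hne : e m ≠ e n := fun h => (Nat.ne_of_gt hmgt) (e.injective h)
    have : dist (u m) (u n) ≤ dist (u m) z + dist z (u n) := dist_triangle _ _ _
    rw [hu] at this
    have hd : dist (HH.pt (e m)) (HH.pt (e n)) = 2 := HH.dist_pt hne
    have h1 : dist (u m) z < 1 := mem_ball.mp hmball
    have h2 : dist z (u n) < 1 := by rw [dist_comm]; exact mem_ball.mp hn
    rw [hd] at this
    linarith
end
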